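/- On ℝ² with the Grushin gradient ∇_X f = (∂f/∂x₁, x₁ ∂f/∂x₂), let d ∈ ℝ and Ω⁺ = {x ∈ ℝ² : x₂ > d}. Then for every p > 1 and every f ∈ C₀^∞(Ω⁺): ∫_{Ω⁺} |∇_X f(x)|^p dx ≥ ((p−1)/p)^p ∫_{Ω⁺} ( |x₁|^p / |x₂ − d|^p ) |f(x)|^p dx. -/

import Mathlib

open MeasureTheory Real Filter Topology Set

/-- The Grushin vector field `X₁ f = ∂f/∂x₁` on `ℝ²`. -/
noncomputable def X1G (f : (Fin 2 → ℝ) → ℝ) (x : Fin 2 → ℝ) : ℝ :=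
  fderiv ℝ f x ![1, 0]

/-- The Grushin vector field `X₂ f = x₁ ∂f/∂x₂` on `ℝ²`. -/
noncomputable def X2G (f : (Fin 2 → ℝ) → ℝ) (x : Fin 2 → ℝ) : ℝ :=
  fderiv ℝ f x ![0, x 0]

lemma cont_abs_rpow {c : ℝ} (hc : 0 < c) : Continuous fun x : ℝ => |x| ^ c :=
  continuous_abs.rpow_const (fun _ => Or.inr hc.le)

lemma cont_abs_rpow_mul {c : ℝ} (hc : -1 < c) : Continuous fun x : ℝ => |x| ^ c * x := by
  rw [continuous_iff_continuousAt]
  intro x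
  rcases eq_or_ne x 0 with hx | hx
  · subst hx
    have h0 : |(0:ℝ)| ^ c * (0:ℝ) = 0 := by simp
    rw [ContinuousAt, h0]
    have hb : ∀ y : ℝ, ‖|y| ^ c * y‖ ≤ |y| ^ (c + 1) := by
      intro y
      rcases eq_or_ne y 0 with hy | hy
      · subst hy; simp [Real.zero_rpow (by linarith : c + 1 ≠ 0)]
      · rw [norm_mul, Real.norm_eq_abs, Real.norm_eq_abs,
          abs_of_nonneg (Real.rpow_nonneg (abs_nonneg y) c),
          Real.rpow_add_one (abs_ne_zero.mpr hy) c]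
    have h2 : Tendsto (fun y : ℝ => |y| ^ (c + 1)) (𝓝 0) (𝓝 0) := by
      have := (cont_abs_rpow (by linarith : (0:ℝ) < c + 1)).tendsto 0
      simpa [Real.zero_rpow (by linarith : c + 1 ≠ 0)] using this
    exact squeeze_zero_norm hb h2
  · have h1 : ContinuousAt (fun y : ℝ => |y| ^ c) x :=
      (Real.continuousAt_rpow_const _ _ (Or.inl (abs_ne_zero.mpr hx))).comp
        continuous_abs.continuousAt
    exact h1.mul continuousAt_id

lemma key_pointwise {p : ℝ} (hp : 1 < p) {w : ℝ} (hw : 0 < w) (x y : ℝ) :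
    w ^ (1 - p) * (p * (|x| ^ (p - 2) * x * y)) ≤
      (p / (p - 1)) ^ (p - 1) * |y| ^ p +
        ((p - 1) ^ 2 / p) * (w ^ (-p) * |x| ^ p) := by
  set q : ℝ := p / (p - 1) with hq_def
  have hcon : p.HolderConjugate q := Real.HolderConjugate.conjExponent hp
  have hp0 : (0:ℝ) < p := by linarith
  have hq0 : (0:ℝ) < q := hcon.symm.pos
  have hqne : q ≠ 0 := hq0.ne'
  have habs : |x| ^ (p - 2) * |x| = |x| ^ (p - 1) := by
    rcases eq_or_ne x 0 with hx | hx
    · subst hx; simp [Real.zero_rpow (by linarith : p - 1 ≠ 0)]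
    · rw [← Real.rpow_add_one (abs_ne_zero.mpr hx) (p - 2), show p - 2 + 1 = p - 1 by ring]
  have step1 : |x| ^ (p - 2) * x * y ≤ |x| ^ (p - 1) * |y| := by
    calc |x| ^ (p - 2) * x * y ≤ |(|x| ^ (p - 2) * x * y)| := le_abs_self _
      _ = |x| ^ (p - 2) * |x| * |y| := by
          rw [abs_mul, abs_mul, abs_of_nonneg (Real.rpow_nonneg (abs_nonneg x) _)]
      _ = |x| ^ (p - 1) * |y| := by rw [habs]
  set ε : ℝ := q ^ (1 / q) with hε_def
  have hε0 : 0 < ε := Real.rpow_pos_of_pos hq0 _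
  have hεp : ε ^ p = q ^ (p - 1) := by
    rw [hε_def, ← Real.rpow_mul hq0.le, one_div, inv_mul_eq_div, hcon.div_conj_eq_sub_one]
  have hεq : ε ^ q = q := by
    rw [hε_def, ← Real.rpow_mul hq0.le, one_div, inv_mul_cancel₀ hqne, Real.rpow_one]
  -- Young's inequality
  have hyoung := Real.young_inequality_of_nonneg
    (a := ε * |y|) (b := (|x| ^ (p - 1) * w ^ (1 - p)) / ε)
    (mul_nonneg hε0.le (abs_nonneg y))
    (div_nonneg (mul_nonneg (Real.rpow_nonneg (abs_nonneg x) _)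
      (Real.rpow_nonneg hw.le _)) hε0.le) hcon
  -- rewrite the pieces of Young's inequality
  have hab : (ε * |y|) * ((|x| ^ (p - 1) * w ^ (1 - p)) / ε) =
      |y| * (|x| ^ (p - 1) * w ^ (1 - p)) := by field_simp
  have hap : (ε * |y|) ^ p = q ^ (p - 1) * |y| ^ p := by
    rw [Real.mul_rpow hε0.le (abs_nonneg y), hεp]
  have hbq : ((|x| ^ (p - 1) * w ^ (1 - p)) / ε) ^ q =
      (w ^ (-p) * |x| ^ p) / q := by
    rw [Real.div_rpow (mul_nonneg (Real.rpow_nonneg (abs_nonneg x) _)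
      (Real.rpow_nonneg hw.le _)) hε0.le, hεq,
      Real.mul_rpow (Real.rpow_nonneg (abs_nonneg x) _) (Real.rpow_nonneg hw.le _),
      ← Real.rpow_mul (abs_nonneg x), ← Real.rpow_mul hw.le]
    have h1 : (p - 1) * q = p := hcon.sub_one_mul_conj
    have h2 : (1 - p) * q = -p := by
      have : (1 - p) * q = -((p - 1) * q) := by ring
      rw [this, h1]
    rw [h1, h2, mul_comm]
  rw [hab, hap, hbq] at hyoung
  -- assemble
  have hw1p : (0:ℝ) ≤ w ^ (1 - p) := Real.rpow_nonneg hw.le _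
  calc w ^ (1 - p) * (p * (|x| ^ (p - 2) * x * y))
      ≤ w ^ (1 - p) * (p * (|x| ^ (p - 1) * |y|)) := by
        apply mul_le_mul_of_nonneg_left _ hw1p
        exact mul_le_mul_of_nonneg_left step1 hp0.le
    _ = p * (|y| * (|x| ^ (p - 1) * w ^ (1 - p))) := by ring
    _ ≤ p * ((q ^ (p - 1) * |y| ^ p) / p + ((w ^ (-p) * |x| ^ p) / q) / q) := by
        exact mul_le_mul_of_nonneg_left hyoung hp0.le
    _ = q ^ (p - 1) * |y| ^ p + (p / q ^ 2) * (w ^ (-p) * |x| ^ p) := by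
        field_simp
    _ = q ^ (p - 1) * |y| ^ p + ((p - 1) ^ 2 / p) * (w ^ (-p) * |x| ^ p) := by
        have : p / q ^ 2 = (p - 1) ^ 2 / p := by
          rw [hq_def]; field_simp
        rw [this]

lemma hardy1D {p : ℝ} (hp : 1 < p) (d ε : ℝ) (hε : 0 < ε)
    (g : ℝ → ℝ) (hg : ContDiff ℝ (⊤ : ℕ∞) g) (hgc : HasCompactSupport g)
    (hsupp : ∀ t, t < d + ε → g t = 0) :
    ((p - 1) / p) ^ p * ∫ t : ℝ, |g t| ^ p / |t - d| ^ p ≤ ∫ t : ℝ, |deriv g t| ^ p := by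
  have hp0 : (0:ℝ) < p := by linarith
  have hp1 : p - 1 ≠ 0 := by intro h; linarith [sub_eq_zero.mp h]
  obtain ⟨R, hR⟩ := hgc.isBounded.subset_closedBall 0
  set a : ℝ := d + ε / 2 with ha_def
  set b : ℝ := max (R + 1) (d + ε) with hb_def
  have hab : a < b := lt_of_lt_of_le (by simp only [ha_def]; linarith) (le_max_right _ _)
  have had : d < a := by simp only [ha_def]; linarith
  have hgb : ∀ t : ℝ, b < t → t ∉ tsupport g := by
    intro t ht hmem
    have := hR hmem
    rw [Metric.mem_closedBall, Real.dist_eq, sub_zero] at this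
    have h1 : R + 1 ≤ b := le_max_left _ _
    have : t ≤ R := le_trans (le_abs_self t) this
    linarith
  have hsupp' : ∀ t : ℝ, t < d + ε → t ∉ tsupport g := by
    intro t ht hmem
    have hsub : Function.support g ⊆ Ici (d + ε) := by
      intro s hs
      by_contra hlt
      exact hs (hsupp s (by simpa using hlt))
    have : tsupport g ⊆ Ici (d + ε) := closure_minimal hsub isClosed_Ici
    have := this hmem
    rw [mem_Ici] at this; linarith
  -- zero outside (a, b]
  have hg_zero : ∀ t : ℝ, t ∉ Ioc a b → g t = 0 := by
    intro t ht
    rcases not_and_or.mp ht with h | h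
    · exact hsupp t (by push_neg at h; simp [ha_def] at h ⊢; linarith)
    · push_neg at h
      exact image_eq_zero_of_notMem_tsupport (hgb t h)
  have hg'_zero : ∀ t : ℝ, t ∉ Ioc a b → deriv g t = 0 := by
    intro t ht
    rcases not_and_or.mp ht with h | h
    · push_neg at h
      have h2 : t ∉ tsupport g := hsupp' t (by simp only [ha_def] at h ⊢; linarith)
      by_contra hne
      exact h2 (support_deriv_subset hne)
    · push_neg at h
      by_contra hne
      exact (hgb t h) (support_deriv_subset hne)
  have htd : ∀ t ∈ Icc a b, 0 < t - d := fun t ht => by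
    have := ht.1; simp [ha_def] at this; linarith
  have hgdiff : ∀ t : ℝ, HasDerivAt g (deriv g t) t :=
    fun t => (hg.differentiable (by simp) t).hasDerivAt
  -- the function F and its derivative
  set A : ℝ → ℝ := fun t => (1 - p) * ((t - d) ^ (-p) * |g t| ^ p) with hA_def
  set B : ℝ → ℝ := fun t =>
    (t - d) ^ (1 - p) * (p * (|g t| ^ (p - 2) * g t * deriv g t)) with hB_def
  have hder : ∀ t ∈ uIcc a b,
      HasDerivAt (fun s => (s - d) ^ (1 - p) * |g s| ^ p) (A t + B t) t := by
    intro t ht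
    rw [uIcc_of_le hab.le] at ht
    have hwd : 0 < t - d := htd t ht
    have h1 : HasDerivAt (fun s : ℝ => (s - d) ^ (1 - p))
        ((1 - p) * (t - d) ^ (1 - p - 1) * 1) t :=
      (Real.hasDerivAt_rpow_const (p := 1 - p) (Or.inl hwd.ne')).comp (h := fun s : ℝ => s - d) t
        ((hasDerivAt_id' t).sub_const d)
    have h2 : HasDerivAt (fun s : ℝ => |g s| ^ p)
        ((p * |g t| ^ (p - 2) * g t) * deriv g t) t :=
      (hasDerivAt_abs_rpow (g t) hp).comp t (hgdiff t)
    have := (show HasDerivAt (fun s => (s - d) ^ (1 - p) * |g s| ^ p) _ t from h1.mul h2)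
    convert this using 1
    rw [hA_def, hB_def]
    simp only []
    rw [show (1:ℝ) - p - 1 = -p by ring]
    ring
  -- continuity facts
  have hcont_g' : Continuous (deriv g) := hg.continuous_deriv (by exact_mod_cast le_top)
  have hcont_u : Continuous fun t => |g t| ^ p := (cont_abs_rpow hp0).comp hg.continuous
  have hcont_psi : Continuous fun t => |g t| ^ (p - 2) * g t :=
    (cont_abs_rpow_mul (by linarith : (-1:ℝ) < p - 2)).comp hg.continuous
  have hcont_w : ∀ c : ℝ, ContinuousOn (fun t : ℝ => (t - d) ^ c) (uIcc a b) := by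
    intro c t ht
    rw [uIcc_of_le hab.le] at ht
    exact ((continuousAt_id.sub continuousAt_const).rpow_const
      (Or.inl (htd t ht).ne')).continuousWithinAt
  have hA_cont : ContinuousOn A (uIcc a b) :=
    (continuousOn_const.mul ((hcont_w (-p)).mul hcont_u.continuousOn))
  have hB_cont : ContinuousOn B (uIcc a b) :=
    (hcont_w (1 - p)).mul (continuousOn_const.mul
      (hcont_psi.continuousOn.mul hcont_g'.continuousOn))
  have hInt : IntervalIntegrable (fun t => A t + B t) volume a b :=
    ((hA_cont.add hB_cont)).intervalIntegrable
  have hIntA : IntervalIntegrable A volume a b := hA_cont.intervalIntegrable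
  have hIntB : IntervalIntegrable B volume a b := hB_cont.intervalIntegrable
  -- FTC
  have hFTC : ∫ t in a..b, (A t + B t) = 0 := by
    rw [intervalIntegral.integral_eq_sub_of_hasDerivAt hder hInt]
    have hga : g a = 0 := hsupp a (by simp only [ha_def]; linarith)
    have hgb' : g b = 0 := by
      have hbR : R < b := lt_of_lt_of_le (by linarith) (le_max_left _ _)
      apply image_eq_zero_of_notMem_tsupport
      intro hmem
      have h3 := hR hmem
      rw [Metric.mem_closedBall, Real.dist_eq, sub_zero] at h3
      have : b ≤ R := le_trans (le_abs_self b) h3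
      linarith
    rw [hga, hgb']
    simp [Real.zero_rpow hp0.ne']
  -- define the two main integrals
  set I : ℝ := ∫ t in a..b, (t - d) ^ (-p) * |g t| ^ p with hI_def
  set J : ℝ := ∫ t in a..b, |deriv g t| ^ p with hJ_def
  have hcontI : ContinuousOn (fun t => (t - d) ^ (-p) * |g t| ^ p) (uIcc a b) :=
    (hcont_w (-p)).mul hcont_u.continuousOn
  have hcontJ : Continuous (fun t => |deriv g t| ^ p) :=
    (cont_abs_rpow hp0).comp hcont_g'
  have hIntI : IntervalIntegrable (fun t => (t - d) ^ (-p) * |g t| ^ p) volume a b :=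
    hcontI.intervalIntegrable
  have hIntJ : IntervalIntegrable (fun t => |deriv g t| ^ p) volume a b :=
    hcontJ.intervalIntegrable a b
  -- from the FTC identity
  have hB_eq : ∫ t in a..b, B t = (p - 1) * I := by
    rw [intervalIntegral.integral_add hIntA hIntB] at hFTC
    have hA_eq : ∫ t in a..b, A t = (1 - p) * I := by
      rw [hA_def, hI_def, ← intervalIntegral.integral_const_mul]
    have : (1 - p) * I + ∫ t in a..b, B t = 0 := by rw [← hA_eq]; exact hFTC
    linarith
  -- the Young-type bound
  set q : ℝ := p / (p - 1) with hq_def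
  have hq0 : (0:ℝ) < q := div_pos hp0 (by linarith)
  set D : ℝ → ℝ := fun t => (p / (p - 1)) ^ (p - 1) * |deriv g t| ^ p +
      ((p - 1) ^ 2 / p) * ((t - d) ^ (-p) * |g t| ^ p) with hD_def
  have hIntD : IntervalIntegrable D volume a b :=
    ((continuous_const.mul hcontJ).continuousOn.add
      (continuousOn_const.mul hcontI)).intervalIntegrable
  have hmono : ∫ t in a..b, B t ≤ ∫ t in a..b, D t := by
    apply intervalIntegral.integral_mono_on hab.le hIntB hIntD
    intro t ht
    exact key_pointwise hp (htd t ht) (g t) (deriv g t)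
  have hD_eq : ∫ t in a..b, D t = (p / (p - 1)) ^ (p - 1) * J + ((p - 1) ^ 2 / p) * I := by
    rw [hD_def]
    rw [intervalIntegral.integral_add (show
        IntervalIntegrable (fun t => (p / (p - 1)) ^ (p - 1) * |deriv g t| ^ p) volume a b from
        (continuous_const.mul hcontJ).continuousOn.intervalIntegrable)
      (show IntervalIntegrable (fun t => ((p - 1) ^ 2 / p) * ((t - d) ^ (-p) * |g t| ^ p)) volume a b
        from (continuousOn_const.mul hcontI).intervalIntegrable),
      intervalIntegral.integral_const_mul, intervalIntegral.integral_const_mul]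
  have hIneq : (p - 1) * I ≤ q ^ (p - 1) * J + ((p - 1) ^ 2 / p) * I := by
    rw [← hB_eq, ← hq_def] at *
    calc (∫ t in a..b, B t) ≤ ∫ t in a..b, D t := hmono
      _ = q ^ (p - 1) * J + ((p - 1) ^ 2 / p) * I := hD_eq
  have h5 : (p - 1) / p * I ≤ q ^ (p - 1) * J := by
    have hid : (p - 1) * I = ((p - 1) ^ 2 / p) * I + ((p - 1) / p) * I := by
      field_simp; ring
    linarith
  -- conclude the interval-integral version
  have hCI : ((p - 1) / p) ^ p * I ≤ J := by
    have hqinv : q⁻¹ = (p - 1) / p := by rw [hq_def, inv_div]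
    have e1 : ((p - 1) / p) ^ p = q ^ (-p) := by
      rw [← hqinv, Real.inv_rpow hq0.le, ← Real.rpow_neg hq0.le]
    have e3 : q ^ (-p) = q ^ (1 - p) * q ^ (-1 : ℝ) := by
      rw [← Real.rpow_add hq0]; congr 1; ring
    have e4 : q ^ (-1 : ℝ) = q⁻¹ := Real.rpow_neg_one q
    have hq1p : (0:ℝ) < q ^ (1 - p) := Real.rpow_pos_of_pos hq0 _
    calc ((p - 1) / p) ^ p * I = q ^ (1 - p) * (((p - 1) / p) * I) := by
          rw [e1, e3, e4, hqinv]; ring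
      _ ≤ q ^ (1 - p) * (q ^ (p - 1) * J) := mul_le_mul_of_nonneg_left h5 hq1p.le
      _ = (q ^ (1 - p) * q ^ (p - 1)) * J := by ring
      _ = J := by rw [← Real.rpow_add hq0]; norm_num
  -- identify the full-line integrals with the interval integrals
  have hIfull : (∫ t : ℝ, |g t| ^ p / |t - d| ^ p) = I := by
    have hzero : ∀ t : ℝ, t ∉ Ioc a b → |g t| ^ p / |t - d| ^ p = 0 := by
      intro t ht
      rw [hg_zero t ht]
      simp [Real.zero_rpow hp0.ne']
    rw [← setIntegral_eq_integral_of_forall_compl_eq_zero hzero, hI_def,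
      ← intervalIntegral.integral_of_le hab.le]
    apply intervalIntegral.integral_congr
    intro t ht
    rw [uIcc_of_le hab.le] at ht
    simp only []
    rw [abs_of_pos (htd t ht), Real.rpow_neg (htd t ht).le]
    field_simp
  have hJfull : (∫ t : ℝ, |deriv g t| ^ p) = J := by
    have hzero : ∀ t : ℝ, t ∉ Ioc a b → |deriv g t| ^ p = 0 := by
      intro t ht
      rw [hg'_zero t ht]
      simp [Real.zero_rpow hp0.ne']
    rw [← setIntegral_eq_integral_of_forall_compl_eq_zero hzero, hJ_def,
      ← intervalIntegral.integral_of_le hab.le]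
  rw [hIfull, hJfull]
  exact hCI

/-- the sharp Hardy inequality on the half-space `{x₂ > d}` of
the Grushin plane. -/
theorem stmt_8 (d : ℝ) (p : ℝ) (hp : 1 < p)
    (f : (Fin 2 → ℝ) → ℝ)
    (hf : ContDiff ℝ (⊤ : ℕ∞) f) (hfc : HasCompactSupport f)
    (hfs : tsupport f ⊆ {x : Fin 2 → ℝ | x 1 > d}) :
    ∫ x in {x : Fin 2 → ℝ | x 1 > d},
        ((X1G f x) ^ 2 + (X2G f x) ^ 2) ^ (p / 2) ≥
      ((p - 1) / p) ^ p *
        ∫ x in {x : Fin 2 → ℝ | x 1 > d},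
          |x 0| ^ p / |x 1 - d| ^ p * |f x| ^ p := by
  have hp0 : (0:ℝ) < p := by linarith
  have hfd : Differentiable ℝ f := hf.differentiable (by simp)
  -- the uniform lower bound on the support
  obtain ⟨ε, hε, hKε⟩ : ∃ ε : ℝ, 0 < ε ∧ ∀ x ∈ tsupport f, d + ε ≤ x 1 := by
    rcases Set.eq_empty_or_nonempty (tsupport f) with hne | hne
    · exact ⟨1, one_pos, fun x hx => absurd hx (by rw [hne]; exact notMem_empty x)⟩
    · obtain ⟨x₀, hx₀K, hmin⟩ := hfc.exists_isMinOn hne (continuous_apply 1).continuousOn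
      refine ⟨x₀ 1 - d, by simpa using hfs hx₀K, fun x hx => ?_⟩
      have := hmin hx
      simp only [Set.mem_setOf_eq] at this
      linarith [this]
  obtain ⟨R, hR⟩ := hfc.isBounded.subset_closedBall 0
  -- slices
  have hLsmooth : ∀ s : ℝ, ContDiff ℝ (⊤ : ℕ∞) (fun t : ℝ => (![s, t] : Fin 2 → ℝ)) := by
    intro s
    apply contDiff_pi.mpr
    intro i
    fin_cases i
    · simpa using contDiff_const
    · simpa using contDiff_fun_id
  have hgsm : ∀ s : ℝ, ContDiff ℝ (⊤ : ℕ∞) (fun t : ℝ => f ![s, t]) :=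
    fun s => hf.comp (hLsmooth s)
  have hLder : ∀ s t : ℝ, HasDerivAt (fun t : ℝ => (![s, t] : Fin 2 → ℝ)) ![0, 1] t := by
    intro s t
    apply hasDerivAt_pi.mpr
    intro i
    fin_cases i
    · simpa using hasDerivAt_const t s
    · simpa using hasDerivAt_id' t
  have hgd : ∀ s t : ℝ, HasDerivAt (fun t : ℝ => f ![s, t]) (fderiv ℝ f ![s, t] ![0, 1]) t := by
    intro s t
    exact (hfd ![s, t]).hasFDerivAt.comp_hasDerivAt t (hLder s t)
  have hderiv_eq : ∀ s t : ℝ, deriv (fun t : ℝ => f ![s, t]) t = fderiv ℝ f ![s, t] ![0, 1] :=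
    fun s t => (hgd s t).deriv
  have hX2_eq : ∀ s t : ℝ, X2G f ![s, t] = s * fderiv ℝ f ![s, t] ![0, 1] := by
    intro s t
    have h1 : (![0, (![s, t] : Fin 2 → ℝ) 0] : Fin 2 → ℝ) = s • ![0, 1] := by
      funext i
      fin_cases i <;> simp
    rw [X2G, h1, (fderiv ℝ f ![s, t]).map_smul, smul_eq_mul]
  -- compact support of slices
  have hgcs : ∀ s : ℝ, HasCompactSupport (fun t : ℝ => f ![s, t]) := by
    intro s
    apply HasCompactSupport.intro (isCompact_Icc (a := -R) (b := R))
    intro t ht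
    by_contra hne
    have hmem : (![s, t] : Fin 2 → ℝ) ∈ tsupport f := subset_closure hne
    have h2 := hR hmem
    rw [Metric.mem_closedBall, dist_zero_right] at h2
    have h3 : |t| ≤ ‖(![s, t] : Fin 2 → ℝ)‖ := by
      have := norm_le_pi_norm (![s, t] : Fin 2 → ℝ) 1
      simpa using this
    exact ht (abs_le.mp (le_trans h3 h2))
  have hgsupp : ∀ s : ℝ, ∀ t : ℝ, t < d + ε → f ![s, t] = 0 := by
    intro s t ht
    by_contra hne
    have hmem : (![s, t] : Fin 2 → ℝ) ∈ tsupport f := subset_closure hne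
    have := hKε _ hmem
    simp only [Matrix.cons_val_one, Matrix.head_cons, Matrix.cons_val_zero] at this
    linarith
  -- the sliced Hardy inequality
  have hslice : ∀ s : ℝ,
      ((p - 1) / p) ^ p * ∫ t : ℝ, |s| ^ p / |t - d| ^ p * |f ![s, t]| ^ p ≤
        ∫ t : ℝ, |X2G f ![s, t]| ^ p := by
    intro s
    have h1d := hardy1D hp d ε hε (fun t => f ![s, t]) (hgsm s) (hgcs s) (hgsupp s)
    have e1 : (∫ t : ℝ, |X2G f ![s, t]| ^ p) =
        |s| ^ p * ∫ t : ℝ, |deriv (fun t : ℝ => f ![s, t]) t| ^ p := by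
      rw [← integral_const_mul]
      congr 1
      funext t
      rw [hX2_eq s t, ← hderiv_eq s t, abs_mul,
        Real.mul_rpow (abs_nonneg s) (abs_nonneg _)]
    have e2 : (∫ t : ℝ, |s| ^ p / |t - d| ^ p * |f ![s, t]| ^ p) =
        |s| ^ p * ∫ t : ℝ, |f ![s, t]| ^ p / |t - d| ^ p := by
      rw [← integral_const_mul]
      congr 1
      funext t
      ring
    rw [e1, e2, ← mul_assoc, mul_comm (((p-1)/p) ^ p) (|s| ^ p), mul_assoc]
    exact mul_le_mul_of_nonneg_left h1d (Real.rpow_nonneg (abs_nonneg s) p)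
  -- names for the three integrands
  set G1 : (Fin 2 → ℝ) → ℝ := fun x => ((X1G f x) ^ 2 + (X2G f x) ^ 2) ^ (p / 2) with hG1_def
  set G2 : (Fin 2 → ℝ) → ℝ := fun x => |X2G f x| ^ p with hG2_def
  set G3 : (Fin 2 → ℝ) → ℝ := fun x => |x 0| ^ p / |x 1 - d| ^ p * |f x| ^ p with hG3_def
  -- continuity
  have hfderiv_cont : Continuous (fderiv ℝ f) := hf.continuous_fderiv (by simp)
  have hX1cont : Continuous (X1G f) := by
    unfold X1G; exact hfderiv_cont.clm_apply continuous_const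
  have hX2cont : Continuous (X2G f) := by
    unfold X2G
    apply hfderiv_cont.clm_apply
    apply continuous_pi
    intro i
    fin_cases i
    · simpa using continuous_const
    · simpa using continuous_apply (0 : Fin 2)
  have hG1cont : Continuous G1 := by
    rw [hG1_def]
    exact ((hX1cont.pow 2).add (hX2cont.pow 2)).rpow_const (fun x => Or.inr (by positivity))
  have hG2cont : Continuous G2 := (cont_abs_rpow hp0).comp hX2cont
  -- vanishing outside the support of f
  have hfder_zero : ∀ x : Fin 2 → ℝ, x ∉ tsupport f → fderiv ℝ f x = 0 := by
    intro x hx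
    by_contra hne
    exact hx (support_fderiv_subset ℝ hne)
  have hX1zero : ∀ x : Fin 2 → ℝ, x ∉ tsupport f → X1G f x = 0 := by
    intro x hx; rw [X1G, hfder_zero x hx]; simp
  have hX2zero : ∀ x : Fin 2 → ℝ, x ∉ tsupport f → X2G f x = 0 := by
    intro x hx; rw [X2G, hfder_zero x hx]; simp
  have hG1zero : ∀ x : Fin 2 → ℝ, x ∉ tsupport f → G1 x = 0 := by
    intro x hx
    rw [hG1_def]
    simp only [hX1zero x hx, hX2zero x hx]
    norm_num
    exact Real.zero_rpow (by positivity)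
  have hG2zero : ∀ x : Fin 2 → ℝ, x ∉ tsupport f → G2 x = 0 := by
    intro x hx
    rw [hG2_def]
    simp only [hX2zero x hx, abs_zero]
    exact Real.zero_rpow hp0.ne'
  have hG3zero : ∀ x : Fin 2 → ℝ, x ∉ tsupport f → G3 x = 0 := by
    intro x hx
    rw [hG3_def]
    simp only [image_eq_zero_of_notMem_tsupport hx, abs_zero, Real.zero_rpow hp0.ne', mul_zero]
  have hG3cont : Continuous G3 := by
    rw [continuous_iff_continuousAt]
    intro x
    by_cases hx : x ∈ tsupport f
    · have hx1 : x 1 - d ≠ 0 := by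
        have := hfs hx
        simp only [Set.mem_setOf_eq] at this
        intro h; rw [sub_eq_zero] at h; rw [h] at this; exact lt_irrefl d this
      have c1 : Continuous fun y : Fin 2 → ℝ => |y 0| ^ p :=
        (cont_abs_rpow hp0).comp (continuous_apply (0 : Fin 2))
      have c2 : Continuous fun y : Fin 2 → ℝ => |y 1 - d| ^ p :=
        (cont_abs_rpow hp0).comp ((continuous_apply (1 : Fin 2)).sub continuous_const)
      have c3 : Continuous fun y : Fin 2 → ℝ => |f y| ^ p :=
        (cont_abs_rpow hp0).comp hf.continuous
      have hden : |x 1 - d| ^ p ≠ 0 :=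
        ne_of_gt (Real.rpow_pos_of_pos (abs_pos.mpr hx1) p)
      rw [hG3_def]
      exact (c1.continuousAt.div c2.continuousAt hden).mul c3.continuousAt
    · have hev : G3 =ᶠ[𝓝 x] fun _ => 0 := by
        filter_upwards [(isClosed_tsupport f).isOpen_compl.mem_nhds hx] with y hy
        exact hG3zero y hy
      exact continuousAt_const.congr hev.symm
  -- integrability
  have hG1int : Integrable G1 volume :=
    hG1cont.integrable_of_hasCompactSupport
      (HasCompactSupport.intro hfc (fun x hx => hG1zero x hx))
  have hG2int : Integrable G2 volume :=
    hG2cont.integrable_of_hasCompactSupport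
      (HasCompactSupport.intro hfc (fun x hx => hG2zero x hx))
  have hG3int : Integrable G3 volume :=
    hG3cont.integrable_of_hasCompactSupport
      (HasCompactSupport.intro hfc (fun x hx => hG3zero x hx))
  -- pointwise comparison G2 ≤ G1
  have hmono12 : ∫ x, G2 x ≤ ∫ x, G1 x := by
    apply integral_mono hG2int hG1int
    intro x
    have h1 : |X2G f x| ^ p = ((X2G f x) ^ 2) ^ (p / 2) := by
      rw [← sq_abs, ← Real.rpow_natCast (|X2G f x|) 2, ← Real.rpow_mul (abs_nonneg _)]
      congr 1
      push_cast
      ring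
    rw [hG2_def, hG1_def]
    simp only []
    rw [h1]
    exact Real.rpow_le_rpow (sq_nonneg _)
      (by nlinarith [sq_nonneg (X1G f x)]) (by positivity)
  -- set integrals equal full integrals
  have hnotU : ∀ x : Fin 2 → ℝ, x ∉ {x : Fin 2 → ℝ | x 1 > d} → x ∉ tsupport f :=
    fun x hx hmem => hx (hfs hmem)
  have hsetG1 : ∫ x in {x : Fin 2 → ℝ | x 1 > d}, G1 x = ∫ x, G1 x :=
    setIntegral_eq_integral_of_forall_compl_eq_zero (fun x hx => hG1zero x (hnotU x hx))
  have hsetG3 : ∫ x in {x : Fin 2 → ℝ | x 1 > d}, G3 x = ∫ x, G3 x :=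
    setIntegral_eq_integral_of_forall_compl_eq_zero (fun x hx => hG3zero x (hnotU x hx))
  -- Fubini
  have hmp : MeasurePreserving
      (MeasurableEquiv.finTwoArrow : (Fin 2 → ℝ) ≃ᵐ ℝ × ℝ).symm volume volume :=
    MeasurePreserving.symm _ (volume_preserving_finTwoArrow ℝ)
  have hesymm : ∀ z : ℝ × ℝ,
      ((MeasurableEquiv.finTwoArrow : (Fin 2 → ℝ) ≃ᵐ ℝ × ℝ).symm z : Fin 2 → ℝ)
        = ![z.1, z.2] := by
    intro z
    funext i
    fin_cases i <;>
      simp [MeasurableEquiv.finTwoArrow, MeasurableEquiv.piFinTwo, piFinTwoEquiv]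
  have htrans : ∀ G : (Fin 2 → ℝ) → ℝ, Integrable G volume →
      Integrable (fun z : ℝ × ℝ => G ![z.1, z.2]) (volume.prod volume) ∧
        (∫ x, G x) = ∫ s : ℝ, ∫ t : ℝ, G ![s, t] := by
    intro G hG
    have h1 : Integrable (fun z : ℝ × ℝ =>
        G ((MeasurableEquiv.finTwoArrow : (Fin 2 → ℝ) ≃ᵐ ℝ × ℝ).symm z)) volume := by
      exact (MeasurePreserving.integrable_comp_emb hmp
        (MeasurableEquiv.measurableEmbedding _)).mpr hG
    have hfun : (fun z : ℝ × ℝ =>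
        G ((MeasurableEquiv.finTwoArrow : (Fin 2 → ℝ) ≃ᵐ ℝ × ℝ).symm z)) =
        fun z : ℝ × ℝ => G ![z.1, z.2] := funext fun z => by rw [hesymm z]
    rw [hfun] at h1
    have h1' : Integrable (fun z : ℝ × ℝ => G ![z.1, z.2]) (volume.prod volume) := by
      rwa [← Measure.volume_eq_prod]
    refine ⟨h1', ?_⟩
    have h2 : (∫ x, G x) = ∫ z : ℝ × ℝ,
        G ((MeasurableEquiv.finTwoArrow : (Fin 2 → ℝ) ≃ᵐ ℝ × ℝ).symm z) :=
      (hmp.integral_comp' G).symm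
    rw [h2, hfun, Measure.volume_eq_prod, integral_prod _ h1']
  obtain ⟨hint2, heq2⟩ := htrans G2 hG2int
  obtain ⟨hint3, heq3⟩ := htrans G3 hG3int
  have hM2 : Integrable (fun s : ℝ => ∫ t : ℝ, G2 ![s, t]) volume :=
    hint2.integral_prod_left
  have hM3 : Integrable (fun s : ℝ => ∫ t : ℝ, G3 ![s, t]) volume :=
    hint3.integral_prod_left
  -- main estimate
  have hlast : ((p - 1) / p) ^ p * ∫ x, G3 x ≤ ∫ x, G2 x := by
    rw [heq2, heq3, ← integral_const_mul]
    apply integral_mono (hM3.const_mul _) hM2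
    intro s
    have e3 : (∫ t : ℝ, G3 ![s, t]) =
        ∫ t : ℝ, |s| ^ p / |t - d| ^ p * |f ![s, t]| ^ p := by
      have hpt : ∀ t : ℝ, G3 ![s, t] = |s| ^ p / |t - d| ^ p * |f ![s, t]| ^ p := by
        intro t; rw [hG3_def]; simp
      simp_rw [hpt]
    have e2 : (∫ t : ℝ, G2 ![s, t]) = ∫ t : ℝ, |X2G f ![s, t]| ^ p := rfl
    simp only []
    rw [e3, e2]
    exact hslice s
  rw [ge_iff_le]
  calc ((p - 1) / p) ^ p * ∫ x in {x : Fin 2 → ℝ | x 1 > d}, G3 x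
      = ((p - 1) / p) ^ p * ∫ x, G3 x := by rw [hsetG3]
    _ ≤ ∫ x, G2 x := hlast
    _ ≤ ∫ x, G1 x := hmono12
    _ = ∫ x in {x : Fin 2 → ℝ | x 1 > d}, G1 x := hsetG1.symm
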